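/- Let φ be a 3-CNF formula with m ≥ 1 clauses over a finite type P of propositional variables, let A_φ and R_φ be the ABox and the full ground rule set of the CNF encoding, and suppose the interpretation I : P → Bool satisfies φ. Let A'_I = A_φ \ ({T(p, v) | p ∈ P, v ≠ I p} ∪ {S(i) | 1 ≤ i ≤ m}). Then there is no set C with A'_I ∪ {S(m)} ⊆ C ⊆ A_φ such that C satisfies R_φ; in particular, A'_I ∪ {S(m)} is contained in no censor for A_φ and R_φ. -/
import Mathlib


/-- A ground rule: a finite body and a family of finite head images. -/
structure GroundRule (α : Type*) where
  body : Finset α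
  heads : Set (Finset α)

/-- A set of atoms `C` satisfies a ground rule `(B, Q)` if `B ⊆ C` implies
that `I ⊆ C` for some `I ∈ Q`. -/
def RuleSat {α : Type*} (C : Set α) (r : GroundRule α) : Prop :=
  ↑r.body ⊆ C → ∃ I ∈ r.heads, ↑I ⊆ C

/-- `C` satisfies a set of ground rules if it satisfies every rule in it. -/
def SatisfiesSet {α : Type*} (C : Set α) (R : Set (GroundRule α)) : Prop :=
  ∀ r ∈ R, RuleSat C r

/-- A censor for an ambient set `A` and rules `R` is a subset of `A` satisfying `R`. -/
def Censor {α : Type*} (A : Set α) (R : Set (GroundRule α)) (C : Set α) : Prop :=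
  C ⊆ A ∧ SatisfiesSet C R

/-- An optimal censor is a censor that is maximal w.r.t. set inclusion. -/
def OptimalCensor {α : Type*} (A : Set α) (R : Set (GroundRule α)) (C : Set α) : Prop :=
  Censor A R C ∧ ∀ C', Censor A R C' → C ⊆ C' → C' = C

/-- The atoms of the CNF encoding. -/
inductive Atom (P : Type) : Type where
  | S : ℕ → Atom P
  | N : ℕ → ℕ → Atom P
  | V : Fin 3 → ℕ → P → Atom P
  | Pl : Fin 3 → ℕ → Bool → Atom P
  | T : P → Bool → Atom P
  | U : Atom P
  deriving DecidableEq

/-- `I` satisfies the 3-CNF `φ` (clauses indexed `1..m` via `Fin m`):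
every clause has some literal `(p, v)` with `I p = v`. -/
def SatCNF {P : Type} {m : ℕ} (I : P → Bool) (φ : Fin m → Fin 3 → P × Bool) : Prop :=
  ∀ i : Fin m, ∃ j : Fin 3, I (φ i j).1 = (φ i j).2

/-- The ABox `A_φ` of the CNF encoding (the `i`-th clause, `i : Fin m`,
has index `i.val + 1` in `1..m`). -/
def abox {P : Type} {m : ℕ} (φ : Fin m → Fin 3 → P × Bool) : Set (Atom P) :=
  {a | ∃ i : Fin m, a = Atom.N i.val (i.val + 1)} ∪
  {a | ∃ (i : Fin m) (j : Fin 3), a = Atom.V j (i.val + 1) (φ i j).1} ∪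
  {a | ∃ (i : Fin m) (j : Fin 3), a = Atom.Pl j (i.val + 1) (φ i j).2} ∪
  {a | ∃ (p : P) (b : Bool), a = Atom.T p b} ∪
  {a | ∃ i : Fin m, a = Atom.S (i.val + 1)}

/-- The full ground rule set `R_φ` of the CNF encoding. -/
def rules (P : Type) [DecidableEq P] (m : ℕ) : Set (GroundRule (Atom P)) :=
  {r | ∃ (j : Fin 3) (i : Fin m) (p : P) (v : Bool),
    r = ⟨({Atom.S (i.val + 1), Atom.N i.val (i.val + 1), Atom.V j (i.val + 1) p,
           Atom.Pl j (i.val + 1) v, Atom.T p v} : Finset (Atom P)),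
         {({Atom.S i.val} : Finset (Atom P))}⟩} ∪
  {r | ∃ p : P,
    r = ⟨({Atom.T p true, Atom.T p false} : Finset (Atom P)),
         {({Atom.U} : Finset (Atom P))}⟩}

/-- The candidate censor `A'_I` built from an interpretation `I`:
remove from `A_φ` all `T(p, v)` with `v ≠ I p` and all `S(i)` with `1 ≤ i ≤ m`. -/
def aboxOf {P : Type} {m : ℕ} (φ : Fin m → Fin 3 → P × Bool) (I : P → Bool) :
    Set (Atom P) :=
  abox φ \ ({a | ∃ (p : P) (v : Bool), v ≠ I p ∧ a = Atom.T p v} ∪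
            {a | ∃ i : Fin m, a = Atom.S (i.val + 1)})

/-- if `I` satisfies `φ` (with `m ≥ 1`), then no set between
`A'_I ∪ {S(m)}` and `A_φ` satisfies `R_φ`. -/
theorem stmt10 {P : Type} [Fintype P] [DecidableEq P] {m : ℕ} (hm : 1 ≤ m)
    (φ : Fin m → Fin 3 → P × Bool) (I : P → Bool) (hI : SatCNF I φ) :
    ¬ ∃ C : Set (Atom P),
        aboxOf φ I ∪ {Atom.S m} ⊆ C ∧ C ⊆ abox φ ∧ SatisfiesSet C (rules P m) := by
  rintro ⟨C, hsub, hCA, hsat⟩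
  have hstep : ∀ i : Fin m, Atom.S (i.val + 1) ∈ C → Atom.S i.val ∈ C := by
    intro i hSi
    obtain ⟨j, hj⟩ := hI i
    have hr : (⟨({Atom.S (i.val + 1), Atom.N i.val (i.val + 1),
           Atom.V j (i.val + 1) (φ i j).1,
           Atom.Pl j (i.val + 1) (φ i j).2, Atom.T (φ i j).1 (φ i j).2} : Finset (Atom P)),
         {({Atom.S i.val} : Finset (Atom P))}⟩ : GroundRule (Atom P)) ∈ rules P m :=
      Or.inl ⟨j, i, (φ i j).1, (φ i j).2, rfl⟩
    have hbody : ↑(({Atom.S (i.val + 1), Atom.N i.val (i.val + 1),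
           Atom.V j (i.val + 1) (φ i j).1,
           Atom.Pl j (i.val + 1) (φ i j).2, Atom.T (φ i j).1 (φ i j).2} : Finset (Atom P))) ⊆ C := by
      intro a ha
      simp only [Finset.coe_insert, Finset.coe_singleton, Set.mem_insert_iff,
        Set.mem_singleton_iff] at ha
      rcases ha with rfl | rfl | rfl | rfl | rfl
      · exact hSi
      · exact hsub (Or.inl ⟨Or.inl (Or.inl (Or.inl (Or.inl ⟨i, rfl⟩))),
          by rintro (⟨p, v, _, h⟩ | ⟨i', h⟩) <;> simp at h⟩)
      · exact hsub (Or.inl ⟨Or.inl (Or.inl (Or.inl (Or.inr ⟨i, j, rfl⟩))),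
          by rintro (⟨p, v, _, h⟩ | ⟨i', h⟩) <;> simp at h⟩)
      · exact hsub (Or.inl ⟨Or.inl (Or.inl (Or.inr ⟨i, j, rfl⟩)),
          by rintro (⟨p, v, _, h⟩ | ⟨i', h⟩) <;> simp at h⟩)
      · refine hsub (Or.inl ⟨Or.inl (Or.inr ⟨(φ i j).1, (φ i j).2, rfl⟩), ?_⟩)
        rintro (⟨p, v, hv, h⟩ | ⟨i', h⟩)
        · obtain ⟨rfl, rfl⟩ : (φ i j).1 = p ∧ (φ i j).2 = v := by
            injection h with h1 h2; exact ⟨h1, h2⟩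
          exact hv hj.symm
        · simp at h
    obtain ⟨Ih, hIh, hIsub⟩ := hsat _ hr hbody
    rw [Set.mem_singleton_iff] at hIh
    subst hIh
    exact hIsub (by simp)
  have hchain : ∀ k, k ≤ m → Atom.S (m - k) ∈ C := by
    intro k
    induction k with
    | zero => intro _; simpa using hsub (Or.inr rfl)
    | succ k ih =>
      intro hk
      have h1 : m - k = (m - (k + 1)) + 1 := by omega
      have h2 := ih (by omega)
      rw [h1] at h2
      exact hstep ⟨m - (k + 1), by omega⟩ h2
  have h0 : Atom.S 0 ∈ C := by simpa using hchain m le_rfl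
  have := hCA h0
  rcases this with (((h | h) | h) | h) | h
  · obtain ⟨i, h⟩ := h; simp at h
  · obtain ⟨i, j, h⟩ := h; simp at h
  · obtain ⟨i, j, h⟩ := h; simp at h
  · obtain ⟨p, b, h⟩ := h; simp at h
  · obtain ⟨i, h⟩ := h; simp at h
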